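/- A Lebesgue-measurable function f : ℝ → ℝ is concave if and only if for all x, y ∈ ℝ, (1/2)·f(x) + (1/2)·f(y) ≤ f((1/2)x + (1/2)y) (Sierpiński's theorem). -/

import Mathlib

open Finset

def IsDist {X : Type} [Fintype X] (p : X → ℝ) : Prop :=
  (∀ x, 0 ≤ p x) ∧ (∑ x, p x) = 1

def NSD {X S : Type} [Fintype X] (S' : Set S) (U : X → S → ℝ) : Set X :=
  {x | ¬ ∃ p : X → ℝ, IsDist p ∧ ∀ s ∈ S', (∑ y, U y s * p y) > U x s}

def NWD {X S : Type} [Fintype X] (S' : Set S) (U : X → S → ℝ) : Set X :=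
  {x | ¬ ∃ p : X → ℝ, IsDist p ∧ (∀ s ∈ S', (∑ y, U y s * p y) ≥ U x s) ∧
      (∃ s ∈ S', (∑ y, U y s * p y) > U x s)}

def NSDhat {X S : Type} (S' : Set S) (U : X → S → ℝ) : Set X :=
  {x | ¬ ∃ y : X, ∀ s ∈ S', U y s > U x s}

def NWDhat {X S : Type} (S' : Set S) (U : X → S → ℝ) : Set X :=
  {x | ¬ ∃ y : X, (∀ s ∈ S', U y s ≥ U x s) ∧ (∃ s ∈ S', U y s > U x s)}

section SierpinskiAux

open MeasureTheory Metric Set Filter Topology ENNReal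

variable {f : ℝ → ℝ}

lemma sier_mid (hm : ∀ x y : ℝ, (1/2) * f x + (1/2) * f y ≤ f ((1/2) * x + (1/2) * y)) :
    ∀ x y : ℝ, f x + f y ≤ 2 * f ((x + y) / 2) := by
  intro x y
  have h := hm x y
  have h2 : (1/2 : ℝ) * x + (1/2) * y = (x + y) / 2 := by ring
  rw [h2] at h
  linarith

lemma sier_dyadic (hm : ∀ x y : ℝ, f x + f y ≤ 2 * f ((x + y) / 2)) :
    ∀ n k : ℕ, k ≤ 2 ^ n → ∀ x y : ℝ,
      ((k : ℝ) / 2 ^ n) * f x + (1 - (k : ℝ) / 2 ^ n) * f y ≤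
        f (((k : ℝ) / 2 ^ n) * x + (1 - (k : ℝ) / 2 ^ n) * y) := by
  intro n
  induction n with
  | zero =>
    intro k hk x y
    interval_cases k <;> norm_num
  | succ n ih =>
    intro k hk x y
    set a : ℕ := k - k / 2 with ha
    set b : ℕ := k / 2 with hb
    have hab : a + b = k := by omega
    have ha2 : a ≤ 2 ^ n := by
      have : k ≤ 2 * 2 ^ n := by rw [← pow_succ'] ; exact hk
      omega
    have hb2 : b ≤ 2 ^ n := by
      have : k ≤ 2 * 2 ^ n := by rw [← pow_succ'] ; exact hk
      omega
    have hA := ih a ha2 x y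
    have hB := ih b hb2 x y
    have habR : (a : ℝ) + (b : ℝ) = (k : ℝ) := by exact_mod_cast congrArg (Nat.cast : ℕ → ℝ) hab
    have hpow : (2 : ℝ) ^ n ≠ 0 := by positivity
    have hpt : ((k : ℝ) / 2 ^ (n+1)) * x + (1 - (k : ℝ) / 2 ^ (n+1)) * y =
        ((((a : ℝ) / 2 ^ n) * x + (1 - (a : ℝ) / 2 ^ n) * y) +
         (((b : ℝ) / 2 ^ n) * x + (1 - (b : ℝ) / 2 ^ n) * y)) / 2 := by
      rw [pow_succ]
      field_simp
      linear_combination (y - x) * habR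
    have hmm := hm ((((a : ℝ) / 2 ^ n) * x + (1 - (a : ℝ) / 2 ^ n) * y))
      ((((b : ℝ) / 2 ^ n) * x + (1 - (b : ℝ) / 2 ^ n) * y))
    have hval : ((k : ℝ) / 2 ^ (n+1)) * f x + (1 - (k : ℝ) / 2 ^ (n+1)) * f y =
        ((((a : ℝ) / 2 ^ n) * f x + (1 - (a : ℝ) / 2 ^ n) * f y) +
         (((b : ℝ) / 2 ^ n) * f x + (1 - (b : ℝ) / 2 ^ n) * f y)) / 2 := by
      rw [pow_succ]
      field_simp
      linear_combination (f y - f x) * habR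
    rw [hval, hpt]
    linarith

lemma sier_bdd_somewhere (hf : Measurable f)
    (hm : ∀ x y : ℝ, f x + f y ≤ 2 * f ((x + y) / 2)) :
    ∀ a b : ℝ, a < b → ∃ c δ m : ℝ, 0 < δ ∧ Ioo (c - δ) (c + δ) ⊆ Ioo a b ∧
      ∀ z : ℝ, |z - c| < δ → m ≤ f z := by
  intro a b hab
  -- the sets where f is bounded below
  set A : ℕ → Set ℝ := fun n => Ioo a b ∩ f ⁻¹' Ici (-(n : ℝ)) with hA
  have hAmeas : ∀ n, MeasurableSet (A n) := fun n =>
    measurableSet_Ioo.inter (hf measurableSet_Ici)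
  have hAunion : Ioo a b ⊆ ⋃ n, A n := by
    intro x hx
    obtain ⟨n, hn⟩ := exists_nat_ge (-f x)
    exact mem_iUnion.2 ⟨n, hx, by simpa using neg_le_of_neg_le hn⟩
  have hpos : ∃ n, volume (A n) ≠ 0 := by
    by_contra h
    push_neg at h
    have h1 : volume (⋃ n, A n) = 0 := by
      simpa [h] using measure_iUnion_null h
    have h2 : volume (Ioo a b) = 0 := measure_mono_null hAunion h1
    rw [Real.volume_Ioo] at h2
    simp [ENNReal.ofReal_eq_zero] at h2
    linarith
  obtain ⟨n, hn⟩ := hpos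
  -- a Lebesgue density point of A n that lies in A n
  have hdens := Besicovitch.ae_tendsto_measure_inter_div volume (A n)
  have hmemae : ∀ᵐ x ∂(volume.restrict (A n)), x ∈ A n := ae_restrict_mem (hAmeas n)
  have hneB : (ae (volume.restrict (A n))).NeBot := by
    rw [ae_neBot]
    intro h0
    exact hn (by rwa [Measure.restrict_eq_zero] at h0)
  obtain ⟨d, hd1, hd2⟩ := (hdens.and hmemae).exists
  have hdab : d ∈ Ioo a b := hd2.1
  -- choose a small radius with high density
  have hev : ∀ᶠ r in 𝓝[>] (0:ℝ),
      (3/4 : ℝ≥0∞) < volume (A n ∩ closedBall d r) / volume (closedBall d r) :=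
    hd1.eventually_const_lt (by
      rw [ENNReal.div_lt_iff (by norm_num) (by norm_num)]
      norm_num)
  set ε := min (d - a) (b - d) with hε
  have hεpos : 0 < ε := lt_min (by linarith [hdab.1]) (by linarith [hdab.2])
  have hIoo : Ioo (0:ℝ) ε ∈ 𝓝[>] (0:ℝ) := Ioo_mem_nhdsGT_of_mem (by simp [hεpos])
  obtain ⟨r, hr1, hr2⟩ := (hev.and (eventually_of_mem hIoo fun x hx => hx)).exists
  obtain ⟨hrpos, hrε⟩ := hr2
  -- turn the density estimate into a measure lower bound
  have hcb : volume (closedBall d r) = ENNReal.ofReal (2 * r) := Real.volume_closedBall d r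
  have hcbne : volume (closedBall d r) ≠ 0 := by
    rw [hcb]; simp [ENNReal.ofReal_eq_zero]; linarith
  have hcbtop : volume (closedBall d r) ≠ ⊤ := by rw [hcb]; exact ENNReal.ofReal_ne_top
  have hmeasP : (3/4 : ℝ≥0∞) * volume (closedBall d r) < volume (A n ∩ closedBall d r) := by
    exact (ENNReal.lt_div_iff_mul_lt (Or.inl hcbne) (Or.inl hcbtop)).1 hr1
  have h34 : (3/4 : ℝ≥0∞) = ENNReal.ofReal (3/4) := by
    rw [ENNReal.ofReal_div_of_pos (by norm_num)]
    norm_num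
  have hmeasP' : ENNReal.ofReal (3/2 * r) < volume (A n ∩ closedBall d r) := by
    refine lt_of_le_of_lt (le_of_eq ?_) hmeasP
    rw [hcb, h34, ← ENNReal.ofReal_mul (by norm_num)]
    congr 1
    ring
  refine ⟨d, r/8, -(n:ℝ), by linarith, ?_, ?_⟩
  · intro z hz
    simp only [Set.mem_Ioo] at hz ⊢
    constructor
    · have : ε ≤ d - a := min_le_left _ _
      linarith [hz.1]
    · have : ε ≤ b - d := min_le_right _ _
      linarith [hz.2]
  · intro z hz
    -- find y ∈ A n with 2z - y ∈ A n
    set P := A n ∩ closedBall d r with hP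
    set Q := (fun y : ℝ => 2*z - y) ⁻¹' P with hQ
    have hPmeas : MeasurableSet P := (hAmeas n).inter measurableSet_closedBall
    have hQmeas : MeasurableSet Q := hPmeas.preimage (by fun_prop)
    have hQvol : volume Q = volume P :=
      (Measure.measurePreserving_sub_left volume (2*z)).measure_preimage hPmeas.nullMeasurableSet
    have hPQ : P ∪ Q ⊆ closedBall d (5/4 * r) := by
      intro y hy
      rcases hy with hy | hy
      · exact closedBall_subset_closedBall (by linarith) hy.2
      · have h1 : 2*z - y ∈ closedBall d r := hy.2
        simp only [mem_closedBall, Real.dist_eq] at h1 ⊢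
        have : |z - d| < r/8 := hz
        have h3 : y - d = 2*(z - d) - (2*z - y - d) := by ring
        calc |y - d| = |2*(z-d) - (2*z - y - d)| := by rw [h3]
          _ ≤ |2*(z-d)| + |2*z - y - d| := abs_sub _ _
          _ ≤ 2 * (r/8) + r := by
              rw [abs_mul, abs_two]
              linarith [h1, this.le]
          _ ≤ 5/4 * r := by linarith
    have hPQne : (P ∩ Q).Nonempty := by
      by_contra hcon
      rw [Set.not_nonempty_iff_eq_empty] at hcon
      have hdisj : Disjoint P Q := disjoint_iff_inter_eq_empty.2 hcon
      have h1 : volume (P ∪ Q) = volume P + volume Q := measure_union hdisj hQmeas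
      have h2 : volume (P ∪ Q) ≤ ENNReal.ofReal (2 * (5/4 * r)) := by
        rw [← Real.volume_closedBall d (5/4*r)]
        exact measure_mono hPQ
      have h3 : ENNReal.ofReal (3/2 * r) + ENNReal.ofReal (3/2 * r) ≤ ENNReal.ofReal (2 * (5/4*r)) := by
        calc ENNReal.ofReal (3/2 * r) + ENNReal.ofReal (3/2 * r)
            ≤ volume P + volume Q := add_le_add hmeasP'.le (hQvol ▸ hmeasP'.le)
          _ = volume (P ∪ Q) := h1.symm
          _ ≤ _ := h2
      rw [← ENNReal.ofReal_add (by linarith) (by linarith)] at h3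
      have := (ENNReal.ofReal_le_ofReal_iff (by linarith)).1 h3
      linarith
    obtain ⟨y, hyP, hyQ⟩ := hPQne
    have hy1 : y ∈ A n := hyP.1
    have hy2 : (2*z - y) ∈ A n := hyQ.1
    have := hm y (2*z - y)
    have hpt : (y + (2*z - y))/2 = z := by ring
    rw [hpt] at this
    have hb1 : -(n:ℝ) ≤ f y := hy1.2
    have hb2 : -(n:ℝ) ≤ f (2*z - y) := hy2.2
    linarith

-- local lower bound at every point
lemma sier_loc_lb (hf : Measurable f)
    (hm : ∀ x y : ℝ, f x + f y ≤ 2 * f ((x + y) / 2)) (x : ℝ) :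
    ∃ ρ m : ℝ, 0 < ρ ∧ ∀ z : ℝ, |z - x| < ρ → m ≤ f z := by
  obtain ⟨c, δ, m₁, hδ, hsub, hlb⟩ :=
    sier_bdd_somewhere hf hm (x + 1) (x + 2) (by linarith)
  have hc : c ∈ Ioo (x+1) (x+2) := hsub ⟨by linarith, by linarith⟩
  obtain ⟨c', δ', m₂, hδ', hsub', hlb'⟩ :=
    sier_bdd_somewhere hf hm (2*x - c - δ/2) (2*x - c + δ/2) (by linarith)
  have hc' : c' ∈ Ioo (2*x - c - δ/2) (2*x - c + δ/2) := hsub' ⟨by linarith, by linarith⟩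
  refine ⟨δ/4, (m₁ + m₂)/2, by linarith, ?_⟩
  intro z hz
  set v := 2*z - c' with hv
  have hvc : |v - c| < δ := by
    have h1 : |c' - (2*x - c)| < δ/2 := by
      rw [abs_lt]; exact ⟨by linarith [hc'.1], by linarith [hc'.2]⟩
    have h2 : v - c = 2*(z - x) - (c' - (2*x - c)) := by rw [hv]; ring
    calc |v - c| = |2*(z-x) - (c' - (2*x - c))| := by rw [h2]
      _ ≤ |2*(z-x)| + |c' - (2*x-c)| := abs_sub _ _
      _ < 2*(δ/4) + δ/2 := by
          rw [abs_mul, abs_two]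
          gcongr
      _ ≤ δ := by linarith
  have h1 : m₁ ≤ f v := hlb v hvc
  have h2 : m₂ ≤ f c' := hlb' c' (by simpa using hδ')
  have h3 := hm c' v
  have hpt : (c' + v)/2 = z := by rw [hv]; ring
  rw [hpt] at h3
  linarith

-- local bounds (both sides) at every point
lemma sier_loc_bd (hf : Measurable f)
    (hm : ∀ x y : ℝ, f x + f y ≤ 2 * f ((x + y) / 2)) (x : ℝ) :
    ∃ ρ m M : ℝ, 0 < ρ ∧ m < M ∧ ∀ z : ℝ, |z - x| < ρ → m ≤ f z ∧ f z ≤ M := by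
  obtain ⟨ρ, m, hρ, hlb⟩ := sier_loc_lb hf hm x
  refine ⟨ρ, m - 1, max (2 * f x - m) (m + 1), hρ, ?_, ?_⟩
  · exact lt_of_lt_of_le (by linarith) (le_max_right _ _)
  intro z hz
  have h1 : m ≤ f z := hlb z hz
  have h2 : |(2*x - z) - x| < ρ := by
    have : (2*x - z) - x = -(z - x) := by ring
    rw [this, abs_neg]; exact hz
  have h3 : m ≤ f (2*x - z) := hlb _ h2
  have h4 := hm z (2*x - z)
  have hpt : (z + (2*x - z))/2 = x := by ring
  rw [hpt] at h4
  refine ⟨by linarith, le_trans (by linarith) (le_max_left _ _)⟩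

lemma sier_cont (hf : Measurable f)
    (hm : ∀ x y : ℝ, f x + f y ≤ 2 * f ((x + y) / 2)) (x : ℝ) :
    ContinuousAt f x := by
  obtain ⟨ρ, m, M, hρ, hmM, hbd⟩ := sier_loc_bd hf hm x
  -- one-sided (lower) Lipschitz-type estimate
  have key : ∀ t : ℝ, |t| < ρ/4 → f x - 2*(M - m)/ρ * |t| ≤ f (x + t) := by
    intro t ht
    rcases eq_or_ne t 0 with rfl | ht0
    · simp
    have habs : 0 < |t| := abs_pos.2 ht0
    set α := |t| / ρ with hα
    have hα0 : 0 < α := by positivity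
    have hα4 : α < 1/4 := by
      rw [hα, div_lt_iff₀ hρ]; linarith
    -- find minimal N with (1/2)^N ≤ 2α
    have hexists : ∃ N : ℕ, (1/2 : ℝ)^N ≤ 2*α := by
      obtain ⟨N, hN⟩ := exists_pow_lt_of_lt_one (by linarith : (0:ℝ) < 2*α)
        (by norm_num : (1/2 : ℝ) < 1)
      exact ⟨N, hN.le⟩
    classical
    set N := Nat.find hexists with hN
    have hNle : (1/2 : ℝ)^N ≤ 2*α := Nat.find_spec hexists
    have hNpos : N ≠ 0 := by
      intro h0
      rw [h0] at hNle
      norm_num at hNle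
      linarith
    have hNgt : α < (1/2 : ℝ)^N := by
      have hprev := Nat.find_min hexists (m := N - 1) (by omega)
      push_neg at hprev
      have h1 : (1/2 : ℝ)^N = (1/2 : ℝ)^(N-1) * (1/2) := by
        rw [← pow_succ]
        congr 1
        omega
      rw [h1]
      linarith
    set lam := (1/2 : ℝ)^N with hlam
    have hlam0 : 0 < lam := by positivity
    set w := x + t / lam with hw
    have hwx : |w - x| < ρ := by
      rw [hw]
      simp only [add_sub_cancel_left]
      rw [abs_div, abs_of_pos hlam0, div_lt_iff₀ hlam0]
      calc |t| = α * ρ := by rw [hα]; field_simp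
        _ < lam * ρ := by exact mul_lt_mul_of_pos_right hNgt hρ
        _ = ρ * lam := by ring
    have hfw := (hbd w hwx).1
    have hfx := hbd x (by simpa using hρ)
    have hdy := sier_dyadic hm N 1 (Nat.one_le_two_pow) w x
    have hco : ((1:ℕ) : ℝ) / 2^N = lam := by
      rw [hlam]
      push_cast
      rw [div_pow]
      norm_num
    rw [hco] at hdy
    have hpt : lam * w + (1 - lam) * x = x + t := by
      rw [hw]
      field_simp
      ring
    rw [hpt] at hdy
    have hlam2 : lam ≤ 2 * α := hNle
    have hest : lam * (f w - f x) ≥ -(2*α) * (M - m) := by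
      have h1 : f w - f x ≥ m - M := by
        have := hfx.2
        linarith
      rcases le_or_gt 0 (f w - f x) with h | h
      · nlinarith
      · nlinarith
    have hαt : 2 * α * (M - m) = 2*(M-m)/ρ * |t| := by
      rw [hα]; field_simp
    nlinarith [hdy, hest]
  -- upper estimate by reflection
  have key2 : ∀ t : ℝ, |t| < ρ/4 → f (x + t) ≤ f x + 2*(M - m)/ρ * |t| := by
    intro t ht
    have hneg : |(-t)| < ρ/4 := by rwa [abs_neg]
    have h1 := key (-t) hneg
    have h2 := hm (x + t) (x + (-t))
    have hpt : ((x + t) + (x + (-t)))/2 = x := by ring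
    rw [hpt] at h2
    rw [abs_neg] at h1
    linarith
  rw [Metric.continuousAt_iff]
  intro ε hε
  set K := 2*(M - m)/ρ with hK
  have hK0 : 0 < K := by
    rw [hK]
    have : 0 < M - m := by linarith
    positivity
  refine ⟨min (ρ/8) (ε/(2*K)), by positivity, ?_⟩
  intro z hz
  rw [Real.dist_eq] at hz ⊢
  have hz1 : |z - x| < ρ/4 := lt_of_lt_of_le (lt_of_lt_of_le hz (min_le_left _ _)) (by linarith)
  have hz2 : |z - x| < ε/(2*K) := lt_of_lt_of_le hz (min_le_right _ _)
  have h1 := key (z - x) hz1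
  have h2 := key2 (z - x) hz1
  rw [add_sub_cancel] at h1 h2
  have h3 : K * |z - x| < K * (ε/(2*K)) := mul_lt_mul_of_pos_left hz2 hK0
  have h4 : K * (ε/(2*K)) = ε/2 := by field_simp
  rw [abs_lt]
  constructor <;> nlinarith [abs_nonneg (z - x)]


end SierpinskiAux

open MeasureTheory Metric Set Filter Topology ENNReal in
theorem stmt2 (f : ℝ → ℝ) (hf : Measurable f) :
    ConcaveOn ℝ Set.univ f ↔
      ∀ x y : ℝ, (1/2) * f x + (1/2) * f y ≤ f ((1/2) * x + (1/2) * y) := by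
  constructor
  · intro hconc x y
    have := hconc.2 (mem_univ x) (mem_univ y) (by norm_num : (0:ℝ) ≤ 1/2)
      (by norm_num : (0:ℝ) ≤ 1/2) (by norm_num)
    simpa [smul_eq_mul] using this
  · intro hmid
    have hm : ∀ x y : ℝ, f x + f y ≤ 2 * f ((x + y) / 2) := by
      intro x y
      have h := hmid x y
      have h2 : (1/2 : ℝ) * x + (1/2) * y = (x + y) / 2 := by ring
      rw [h2] at h
      linarith
    refine ⟨convex_univ, ?_⟩
    intro x _ y _ a b ha hb hab
    simp only [smul_eq_mul]
    have ha1 : a ≤ 1 := by linarith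
    -- dyadic approximations of a
    set k : ℕ → ℕ := fun n => ⌊2^n * a⌋₊ with hk
    set d : ℕ → ℝ := fun n => (k n : ℝ) / 2^n with hd
    have hk2 : ∀ n, k n ≤ 2^n := by
      intro n
      calc k n ≤ ⌊(2^n : ℝ)⌋₊ := Nat.floor_le_floor (by nlinarith [pow_pos (by norm_num : (0:ℝ) < 2) n])
        _ = 2^n := by
            rw [← Nat.cast_ofNat (n := 2), ← Nat.cast_pow, Nat.floor_natCast]
    have hdle : ∀ n, d n ≤ a := by
      intro n
      rw [hd]
      have h1 : (k n : ℝ) ≤ 2^n * a := Nat.floor_le (by positivity)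
      have h2 : (0:ℝ) < 2^n := by positivity
      rw [div_le_iff₀ h2]
      linarith
    have hdge : ∀ n, a - (1/2)^n ≤ d n := by
      intro n
      have h1 : 2^n * a < (k n : ℝ) + 1 := Nat.lt_floor_add_one _
      have h2 : (0:ℝ) < 2^n := by positivity
      rw [hd, le_div_iff₀ h2]
      have h3 : ((1:ℝ)/2)^n = 1/2^n := by rw [div_pow]; norm_num
      rw [h3]
      field_simp
      nlinarith
    have hdtend : Tendsto d atTop (𝓝 a) := by
      have h0 : Tendsto (fun n : ℕ => ((1:ℝ)/2)^n) atTop (𝓝 0) := by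
        apply _root_.tendsto_pow_atTop_nhds_zero_of_lt_one <;> norm_num
      have h1 : Tendsto (fun n => d n - a) atTop (𝓝 0) := by
        refine squeeze_zero_norm ?_ h0
        intro n
        rw [Real.norm_eq_abs, abs_le]
        constructor
        · linarith [hdge n]
        · have := hdle n
          have : d n - a ≤ 0 := by linarith
          have hp : (0:ℝ) ≤ ((1:ℝ)/2)^n := by positivity
          linarith
      have := h1.add_const a
      simpa using this
    -- the sequence of combinations
    have hcomb : ∀ n, d n * f x + (1 - d n) * f y ≤ f (d n * x + (1 - d n) * y) := by
      intro n
      exact sier_dyadic hm n (k n) (hk2 n) x y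
    have htx : Tendsto (fun n => d n * x + (1 - d n) * y) atTop (𝓝 (a * x + b * y)) := by
      have : b = 1 - a := by linarith
      rw [this]
      exact ((hdtend.mul_const x).add (((tendsto_const_nhds (x := (1:ℝ))).sub hdtend).mul_const y))
    have htf : Tendsto (fun n => f (d n * x + (1 - d n) * y)) atTop (𝓝 (f (a * x + b * y))) :=
      ((sier_cont hf hm (a * x + b * y)).tendsto).comp htx
    have htl : Tendsto (fun n => d n * f x + (1 - d n) * f y) atTop
        (𝓝 (a * f x + b * f y)) := by
      have : b = 1 - a := by linarith
      rw [this]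
      exact ((hdtend.mul_const (f x)).add
        (((tendsto_const_nhds (x := (1:ℝ))).sub hdtend).mul_const (f y)))
    exact le_of_tendsto_of_tendsto' htl htf hcomb
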